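/- Let p be a prime and let A ⊆ ℤ/pℤ \ {0} with |A| = k+1, where k ≥ 2 and p > k+1. If some coefficient d_{k+1,j} (j ∈ {1,…,k+1}) of the monomial ∏_{i≠j} x_i^k in f_{k+1}(x₁,…,x_{k+1}) = g_k(x₂,…,x_{k+1})·∏_{i=2}^{k+1}(x_i − x₁) is nonzero modulo p, then there exists an ordering of the elements of A whose partial sums s₁,…,s_{k+1} are pairwise distinct. -/
import Mathlib


open MvPolynomial

private theorem lagSum {F : Type*} [Field F] [DecidableEq F] (S : Finset F) (e : ℕ)
    (he : e < S.card) :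
    ∑ x ∈ S, x ^ e * (∏ b ∈ S.erase x, (x - b))⁻¹ = if e = S.card - 1 then 1 else 0 := by
  classical
  have hinj : Set.InjOn id (S : Set F) := Set.injOn_id _
  have hdeg : ((Polynomial.X : Polynomial F) ^ e).degree < S.card := by
    simpa [Polynomial.degree_X_pow] using (Nat.cast_lt.mpr he : (e : WithBot ℕ) < S.card)
  have h := Lagrange.eq_interpolate (v := id) hinj hdeg
  have h2 := congrArg (fun q : Polynomial F => q.coeff (S.card - 1)) h
  simp only [Lagrange.interpolate_apply, Polynomial.finset_sum_coeff, Polynomial.coeff_C_mul,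
    Polynomial.eval_pow, Polynomial.eval_X, id] at h2
  have hbasis : ∀ x ∈ S, (Lagrange.basis S id x).coeff (S.card - 1)
      = (∏ b ∈ S.erase x, (x - b))⁻¹ := by
    intro x hx
    have : Lagrange.basis S id x
        = Polynomial.C (∏ b ∈ S.erase x, (x - b))⁻¹ *
            ∏ b ∈ S.erase x, (Polynomial.X - Polynomial.C b) := by
      rw [Lagrange.basis]
      simp only [Lagrange.basisDivisor, id]
      rw [Finset.prod_mul_distrib, ← map_prod, Finset.prod_inv_distrib]
    rw [this, Polynomial.coeff_C_mul]
    have hmon : (∏ b ∈ S.erase x, (Polynomial.X - Polynomial.C b) : Polynomial F).Monic :=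
      Polynomial.monic_prod_of_monic _ _ fun b _ => Polynomial.monic_X_sub_C b
    have hnd : (∏ b ∈ S.erase x, (Polynomial.X - Polynomial.C b) : Polynomial F).natDegree
        = S.card - 1 := by
      rw [Polynomial.natDegree_prod_of_monic _ _ fun b _ => Polynomial.monic_X_sub_C b]
      simp [Finset.card_erase_of_mem hx]
    rw [← hnd, hmon.coeff_natDegree, mul_one]
  rw [Finset.sum_congr rfl (fun x hx => by rw [hbasis x hx])] at h2
  rw [← h2, Polynomial.coeff_X_pow]
  have : S.card - 1 = e ↔ e = S.card - 1 := eq_comm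
  simp [this]

private theorem cnCoeff {F : Type*} [Field F] [DecidableEq F] {n : ℕ} (S : Fin n → Finset F)
    (d : Fin n → ℕ) (hd : ∀ i, (S i).card = d i + 1)
    (f : MvPolynomial (Fin n) F) (hdeg : f.totalDegree ≤ ∑ i, d i)
    (m : Fin n →₀ ℕ) (hm : ∀ i, (m : Fin n → ℕ) i = d i) :
    f.coeff m = ∑ a ∈ Fintype.piFinset S,
      eval a f * ∏ i, (∏ b ∈ (S i).erase (a i), (a i - b))⁻¹ := by
  have key : ∀ e ∈ f.support,
      (∏ i, ∑ x ∈ S i, x ^ (e : Fin n → ℕ) i * (∏ b ∈ (S i).erase x, (x - b))⁻¹)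
        = if e = m then 1 else 0 := by
    intro e he
    have hesum : ∑ i, (e : Fin n → ℕ) i ≤ ∑ i, d i := by
      refine le_trans ?_ hdeg
      refine le_trans (le_of_eq ?_) (le_totalDegree he)
      rw [Finsupp.sum_fintype]
      intro i; rfl
    by_cases hem : e = m
    · subst hem
      rw [if_pos rfl]
      refine Finset.prod_eq_one fun i _ => ?_
      rw [lagSum (S i) _ (by rw [hd i, hm i]; omega), hm i, hd i]
      simp
    · rw [if_neg hem]
      have : ∃ i, (e : Fin n → ℕ) i < d i := by
        by_contra hcon
        push_neg at hcon
        have heq : ∀ i ∈ Finset.univ, d i = (e : Fin n → ℕ) i :=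
          (Finset.sum_eq_sum_iff_of_le fun i _ => hcon i).mp
            (le_antisymm (Finset.sum_le_sum fun i _ => hcon i) hesum)
        exact hem (Finsupp.ext fun i => (heq i (Finset.mem_univ i)).symm.trans (hm i).symm ▸ rfl)
      obtain ⟨i0, hi0⟩ := this
      refine Finset.prod_eq_zero (Finset.mem_univ i0) ?_
      rw [lagSum (S i0) _ (by rw [hd i0]; omega), hd i0]
      simp only [Nat.add_sub_cancel]
      rw [if_neg (by omega)]
  symm
  calc ∑ a ∈ Fintype.piFinset S, eval a f * ∏ i, (∏ b ∈ (S i).erase (a i), (a i - b))⁻¹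
      = ∑ a ∈ Fintype.piFinset S, ∑ e ∈ f.support,
          f.coeff e * ∏ i, (a i ^ (e : Fin n → ℕ) i * (∏ b ∈ (S i).erase (a i), (a i - b))⁻¹) := by
        refine Finset.sum_congr rfl fun a _ => ?_
        rw [eval_eq', Finset.sum_mul]
        refine Finset.sum_congr rfl fun e _ => ?_
        rw [mul_assoc, Finset.prod_mul_distrib]
    _ = ∑ e ∈ f.support, f.coeff e * ∑ a ∈ Fintype.piFinset S,
          ∏ i, (a i ^ (e : Fin n → ℕ) i * (∏ b ∈ (S i).erase (a i), (a i - b))⁻¹) := by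
        rw [Finset.sum_comm]
        exact Finset.sum_congr rfl fun e _ => (Finset.mul_sum _ _ _).symm
    _ = ∑ e ∈ f.support, f.coeff e *
          ∏ i, ∑ x ∈ S i, x ^ (e : Fin n → ℕ) i * (∏ b ∈ (S i).erase x, (x - b))⁻¹ := by
        refine Finset.sum_congr rfl fun e _ => ?_
        rw [Finset.prod_univ_sum]
    _ = ∑ e ∈ f.support, f.coeff e * if e = m then 1 else 0 :=
        Finset.sum_congr rfl fun e he => by rw [key e he]
    _ = f.coeff m := by
        simp only [mul_ite, mul_one, mul_zero, Finset.sum_ite_eq']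
        split
        · rfl
        · next h => exact (notMem_support_iff.mp h).symm

private theorem gPoly_totalDegree_le (F : Type*) [Field F] (k : ℕ)
    (g : MvPolynomial (Fin k) F)
    (hg : g = ∏ j : Fin k, ∏ i ∈ Finset.univ.filter (· < j),
      ((X j - X i) * ∑ r ∈ Finset.Icc i j, X r)) :
    g.totalDegree ≤ k * (k - 1) := by
  subst hg
  refine (totalDegree_finset_prod _ _).trans ?_
  have h1 : ∀ jj : Fin k,
      (∏ i ∈ Finset.univ.filter (· < jj), ((X jj - X i) * ∑ r ∈ Finset.Icc i jj, X r) :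
        MvPolynomial (Fin k) F).totalDegree ≤ 2 * jj.val := by
    intro jj
    refine (totalDegree_finset_prod _ _).trans ?_
    have hcard : (Finset.univ.filter (· < jj)).card = jj.val := by
      have : Finset.univ.filter (· < jj) = Finset.Iio jj := by
        ext x; simp
      rw [this, Fin.card_Iio]
    calc ∑ i ∈ Finset.univ.filter (· < jj),
          ((X jj - X i) * ∑ r ∈ Finset.Icc i jj, X r : MvPolynomial (Fin k) F).totalDegree
        ≤ ∑ _i ∈ Finset.univ.filter (· < jj), 2 := by
          refine Finset.sum_le_sum fun i _ => ?_
          refine (totalDegree_mul _ _).trans ?_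
          have ha : (X jj - X i : MvPolynomial (Fin k) F).totalDegree ≤ 1 := by
            refine (totalDegree_sub _ _).trans ?_
            simp [totalDegree_X]
          have hb : ((∑ r ∈ Finset.Icc i jj, X r : MvPolynomial (Fin k) F)).totalDegree ≤ 1 := by
            refine (totalDegree_finset_sum _ _).trans ?_
            exact Finset.sup_le fun r _ => le_of_eq (totalDegree_X r)
          omega
      _ = 2 * jj.val := by rw [Finset.sum_const, hcard, smul_eq_mul, mul_comm]
  calc ∑ jj : Fin k, (∏ i ∈ Finset.univ.filter (· < jj),
        ((X jj - X i) * ∑ r ∈ Finset.Icc i jj, X r) : MvPolynomial (Fin k) F).totalDegree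
      ≤ ∑ jj : Fin k, 2 * jj.val := Finset.sum_le_sum fun jj _ => h1 jj
    _ = k * (k - 1) := by
        rw [← Finset.mul_sum]
        rw [Fin.sum_univ_eq_sum_range (fun t => t) k]
        have := Finset.sum_range_id_mul_two k
        omega

/-- `g_k = ∏_{1 ≤ i < j ≤ k} (x_j - x_i)(x_i + ⋯ + x_j)`, with variables indexed
by `Fin k` (so `x₁` corresponds to index `0`, …, `x_k` to index `k-1`). -/
noncomputable def gPoly (R : Type*) [CommRing R] (k : ℕ) : MvPolynomial (Fin k) R :=
  ∏ j : Fin k, ∏ i ∈ Finset.univ.filter (· < j),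
    ((X j - X i) * ∑ r ∈ Finset.Icc i j, X r)

theorem stmt17 (p k : ℕ) (hp : p.Prime) (hk : 2 ≤ k) (hpk : k + 1 < p)
    (A : Finset (ZMod p)) (hA0 : (0 : ZMod p) ∉ A) (hcard : A.card = k + 1)
    (j : Fin (k + 1))
    (hc : ¬ ((p : ℤ) ∣
      (rename Fin.succ (gPoly ℤ k) *
          ∏ i ∈ Finset.univ.erase (0 : Fin (k + 1)), (X i - X 0)).coeff
        (∑ r ∈ Finset.univ.erase j, Finsupp.single r k))) :
    ∃ l : List (ZMod p), l.Nodup ∧ (∀ x, x ∈ l ↔ x ∈ A) ∧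
      ∀ i j' : ℕ, 1 ≤ i → i < j' → j' ≤ l.length →
        (l.take i).sum ≠ (l.take j').sum := by
  classical
  haveI : Fact p.Prime := ⟨hp⟩
  set φ : ℤ →+* ZMod p := Int.castRingHom (ZMod p) with hφ
  set m : Fin (k + 1) →₀ ℕ := ∑ r ∈ Finset.univ.erase j, Finsupp.single r k with hmdef
  set fF : MvPolynomial (Fin (k + 1)) (ZMod p) :=
    rename Fin.succ (gPoly (ZMod p) k) * ∏ i ∈ Finset.univ.erase (0 : Fin (k + 1)), (X i - X 0)
    with hfF
  -- coefficient nonzero over F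
  have hmapg : map φ (gPoly ℤ k) = gPoly (ZMod p) k := by simp [gPoly]
  have hmap : map φ (rename Fin.succ (gPoly ℤ k) *
      ∏ i ∈ Finset.univ.erase (0 : Fin (k + 1)), (X i - X 0)) = fF := by
    rw [map_mul, map_rename, hmapg, map_prod]
    simp [hfF]
  have hcF : fF.coeff m ≠ 0 := by
    rw [← hmap, coeff_map]
    intro h
    apply hc
    rwa [← ZMod.intCast_zmod_eq_zero_iff_dvd]
  -- evaluation sets
  obtain ⟨a0, ha0A⟩ : A.Nonempty := Finset.card_pos.mp (by rw [hcard]; omega)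
  set S : Fin (k + 1) → Finset (ZMod p) := fun i => if i = j then {a0} else A with hS
  set d : Fin (k + 1) → ℕ := fun i => if i = j then 0 else k with hd
  have hdcard : ∀ i, (S i).card = d i + 1 := by
    intro i
    by_cases h : i = j <;> simp [hS, hd, h, hcard]
  have hsumd : ∑ i, d i = k * k := by
    rw [← Finset.add_sum_erase _ _ (Finset.mem_univ j)]
    have : ∀ i ∈ Finset.univ.erase j, d i = k := by
      intro i hi
      simp [hd, (Finset.mem_erase.mp hi).1]
    rw [Finset.sum_congr rfl this, Finset.sum_const, Finset.card_erase_of_mem (Finset.mem_univ j)]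
    simp [hd, Finset.card_univ, mul_comm]
  have hmapp : ∀ i, (m : Fin (k + 1) → ℕ) i = d i := by
    intro i
    rw [hmdef]
    rw [Finsupp.finset_sum_apply]
    simp only [Finsupp.single_apply]
    rw [Finset.sum_ite_eq' (Finset.univ.erase j) i fun _ => k]
    by_cases h : i = j <;> simp [hd, h]
  -- total degree bound
  have hdeg : fF.totalDegree ≤ ∑ i, d i := by
    rw [hsumd, hfF]
    refine (totalDegree_mul _ _).trans ?_
    have h1 : (rename Fin.succ (gPoly (ZMod p) k)).totalDegree ≤ k * (k - 1) :=
      (totalDegree_rename_le _ _).trans (gPoly_totalDegree_le (ZMod p) k _ rfl)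
    have h2 : (∏ i ∈ Finset.univ.erase (0 : Fin (k + 1)), (X i - X 0) :
        MvPolynomial (Fin (k + 1)) (ZMod p)).totalDegree ≤ k := by
      refine (totalDegree_finset_prod _ _).trans ?_
      calc ∑ i ∈ Finset.univ.erase (0 : Fin (k + 1)),
            (X i - X 0 : MvPolynomial (Fin (k + 1)) (ZMod p)).totalDegree
          ≤ ∑ _i ∈ Finset.univ.erase (0 : Fin (k + 1)), 1 := by
            refine Finset.sum_le_sum fun i _ => ?_
            refine (totalDegree_sub _ _).trans ?_
            simp [totalDegree_X]
        _ = k := by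
            rw [Finset.sum_const, Finset.card_erase_of_mem (Finset.mem_univ _)]
            simp [Finset.card_univ]
    refine le_trans (add_le_add h1 h2) ?_
    obtain ⟨q, rfl⟩ : ∃ q, k = q + 1 := ⟨k - 1, by omega⟩
    rw [Nat.add_sub_cancel]
    exact le_of_eq (by ring)
  -- apply CN
  have hcoeffeq := cnCoeff S d hdcard fF hdeg m hmapp
  rw [hcoeffeq] at hcF
  obtain ⟨a, haS, hane⟩ := Finset.exists_ne_zero_of_sum_ne_zero hcF
  rw [Fintype.mem_piFinset] at haS
  have heval : eval a fF ≠ 0 := fun h => hane (by rw [h, zero_mul])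
  have haA : ∀ i, a i ∈ A := by
    intro i
    have hi := haS i
    by_cases h : i = j
    · subst h
      simp only [hS, if_pos rfl, Finset.mem_singleton] at hi
      rw [hi]; exact ha0A
    · simpa [hS, h] using hi
  -- split the evaluation
  have hevalsplit : eval a fF =
      eval (a ∘ Fin.succ) (gPoly (ZMod p) k) * ∏ i ∈ Finset.univ.erase (0 : Fin (k + 1)), (a i - a 0) := by
    rw [hfF, eval_mul, eval_rename]
    congr 1
    rw [map_prod]
    simp
  rw [hevalsplit] at heval
  obtain ⟨hgne, hpne⟩ := mul_ne_zero_iff.mp heval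
  have hgev : eval (a ∘ Fin.succ) (gPoly (ZMod p) k) =
      ∏ jj : Fin k, ∏ ii ∈ Finset.univ.filter (· < jj),
        ((a jj.succ - a ii.succ) * ∑ r ∈ Finset.Icc ii jj, a r.succ) := by
    rw [gPoly]
    rw [map_prod]
    refine Finset.prod_congr rfl fun jj _ => ?_
    rw [map_prod]
    refine Finset.prod_congr rfl fun ii _ => ?_
    simp [Function.comp]
  rw [hgev, Finset.prod_ne_zero_iff] at hgne
  rw [Finset.prod_ne_zero_iff] at hpne
  have hfac : ∀ jj ii : Fin k, ii < jj →
      a jj.succ - a ii.succ ≠ 0 ∧ (∑ r ∈ Finset.Icc ii jj, a r.succ) ≠ 0 := by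
    intro jj ii hlt
    have h1 := hgne jj (Finset.mem_univ _)
    rw [Finset.prod_ne_zero_iff] at h1
    exact mul_ne_zero_iff.mp (h1 ii (by simp [hlt]))
  -- a is injective
  have key : ∀ i1 i2 : Fin (k + 1), i1 < i2 → a i1 ≠ a i2 := by
    intro i1 i2 hlt
    rcases Fin.eq_zero_or_eq_succ i1 with h1 | ⟨ii, rfl⟩
    · subst h1
      have hi2 : i2 ≠ 0 := fun h => by simp [h] at hlt
      have := hpne i2 (Finset.mem_erase.mpr ⟨hi2, Finset.mem_univ _⟩)
      exact (sub_ne_zero.mp this).symm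
    · rcases Fin.eq_zero_or_eq_succ i2 with h2 | ⟨jj2, rfl⟩
      · exact absurd (h2 ▸ hlt) (Fin.not_lt_zero _)
      · have hlt' : ii < jj2 := by rwa [Fin.succ_lt_succ_iff] at hlt
        exact (sub_ne_zero.mp (hfac jj2 ii hlt').1).symm
  have hinj : Function.Injective a := by
    intro x y hxy
    by_contra hne
    rcases lt_or_gt_of_ne hne with h | h
    · exact key x y h hxy
    · exact key y x h hxy.symm
  -- build the list
  refine ⟨List.ofFn a, List.nodup_ofFn.mpr hinj, ?_, ?_⟩
  · have hlen : (List.ofFn a).length = k + 1 := by simp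
    have hsub : (List.ofFn a).toFinset ⊆ A := by
      intro x hx
      rw [List.mem_toFinset, List.mem_ofFn] at hx
      obtain ⟨i, rfl⟩ := hx
      exact haA i
    have hfin : (List.ofFn a).toFinset = A := by
      refine Finset.eq_of_subset_of_card_le hsub ?_
      rw [hcard, List.toFinset_card_of_nodup (List.nodup_ofFn.mpr hinj), hlen]
    intro x
    rw [← hfin, List.mem_toFinset]
  · intro i j' h1i hij' hj'len
    rw [List.length_ofFn] at hj'len
    set a' : ℕ → ZMod p := fun t => if h : t < k + 1 then a ⟨t, h⟩ else 0 with ha'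
    have hts : ∀ M, M ≤ k + 1 → ((List.ofFn a).take M).sum = ∑ t ∈ Finset.range M, a' t := by
      intro M hM
      induction M with
      | zero => simp
      | succ M ih =>
        have hM' : M < k + 1 := by omega
        rw [List.sum_take_succ _ _ (by simpa using hM'), ih (by omega), Finset.sum_range_succ]
        congr 1
        rw [List.getElem_ofFn]
        rw [ha']
        simp only [hM', dif_pos]
    rw [hts i (by omega), hts j' hj'len]
    intro heq
    have hsplit : ∑ t ∈ Finset.range i, a' t + ∑ t ∈ Finset.Ico i j', a' t
        = ∑ t ∈ Finset.range j', a' t := by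
      simp only [Finset.range_eq_Ico]
      exact Finset.sum_Ico_consecutive _ (by omega) (by omega)
    have hIco : ∑ t ∈ Finset.Ico i j', a' t = 0 := by
      rw [heq] at hsplit
      exact add_eq_left.mp hsplit
    have hi1 : i < k + 1 := by omega
    rcases eq_or_lt_of_le (by omega : i + 1 ≤ j') with hj1 | hj2
    · -- window of length 1
      rw [← hj1, Nat.Ico_succ_singleton, Finset.sum_singleton, ha'] at hIco
      simp only [hi1, dif_pos] at hIco
      exact hA0 (hIco ▸ haA ⟨i, hi1⟩)
    · -- window of length ≥ 2
      have hii : i - 1 < k := by omega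
      have hjj : j' - 2 < k := by omega
      have hlt : (⟨i - 1, hii⟩ : Fin k) < ⟨j' - 2, hjj⟩ := by
        rw [Fin.lt_def]; simp; omega
      refine (hfac ⟨j' - 2, hjj⟩ ⟨i - 1, hii⟩ hlt).2 ?_
      have step1 : ∑ r ∈ Finset.Icc (⟨i - 1, hii⟩ : Fin k) ⟨j' - 2, hjj⟩, a r.succ
          = ∑ t ∈ Finset.Icc (i - 1) (j' - 2), a' (t + 1) := by
        have hmapIcc : Finset.Icc (i - 1) (j' - 2)
            = (Finset.Icc (⟨i - 1, hii⟩ : Fin k) ⟨j' - 2, hjj⟩).map Fin.valEmbedding := by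
          rw [Fin.map_valEmbedding_Icc]
        rw [hmapIcc, Finset.sum_map]
        refine Finset.sum_congr rfl fun r _ => ?_
        rw [ha']
        simp only [Fin.valEmbedding_apply]
        rw [dif_pos (by omega : r.val + 1 < k + 1)]
        rfl
      have step2 : ∑ t ∈ Finset.Icc (i - 1) (j' - 2), a' (t + 1)
          = ∑ t ∈ Finset.Ico i j', a' t := by
        have h21 : Finset.Icc (i - 1) (j' - 2) = Finset.Ico (i - 1) (j' - 1) := by
          ext x
          rw [Finset.mem_Icc, Finset.mem_Ico]
          omega
        rw [h21, Finset.sum_Ico_eq_sum_range, Finset.sum_Ico_eq_sum_range]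
        have hn : j' - 1 - (i - 1) = j' - i := by omega
        rw [hn]
        refine Finset.sum_congr rfl fun t _ => ?_
        congr 1
        omega
      rw [step1, step2, hIco]
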